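/- Let ℓ be a prime and m, n ∈ ℕ ∪ {∞} with n ≤ m. Let K be a field with μ_{ℓ^m} ⊂ K. Then the canonical map 𝔤^m(K) → 𝔤^n(K), σ ↦ σ_n, is surjective, and its kernel is ℓ^n·𝔤^m(K); in particular it induces an isomorphism 𝔤^m(K)/ℓ^n·𝔤^m(K) ≅ 𝔤^n(K). -/

import Mathlib

open Polynomial

noncomputable section

/-- The coefficient ring `Λ_m`: `ℤ/ℓ^m` for finite `m`, and `ℤ_ℓ` for `m = ∞`. -/
def Lam (ℓ : ℕ) [Fact ℓ.Prime] : ℕ∞ → Type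
  | ⊤ => PadicInt ℓ
  | (m : ℕ) => ZMod (ℓ ^ m)

instance (ℓ : ℕ) [Fact ℓ.Prime] : (m : ℕ∞) → CommRing (Lam ℓ m)
  | ⊤ => inferInstanceAs (CommRing (PadicInt ℓ))
  | (m : ℕ) => inferInstanceAs (CommRing (ZMod (ℓ ^ m)))

/-- The canonical projection `Λ_m → Λ_n` (for `n ≤ m`; junk value `0` otherwise). -/
def LamProj (ℓ : ℕ) [Fact ℓ.Prime] : (m n : ℕ∞) → Lam ℓ m →+ Lam ℓ n
  | ⊤, ⊤ => AddMonoidHom.id _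
  | ⊤, (n : ℕ) => (PadicInt.toZModPow n).toAddMonoidHom
  | (m : ℕ), (n : ℕ) =>
      if h : ℓ ^ n ∣ ℓ ^ m then (ZMod.castHom h (ZMod (ℓ ^ n))).toAddMonoidHom else 0
  | (_ : ℕ), ⊤ => 0

/-- The `ℓ^m`-minimized Galois group `𝔤^m(K) = Hom(Kˣ, Λ_m)`. -/
abbrev gal (ℓ : ℕ) [Fact ℓ.Prime] (m : ℕ∞) (K : Type*) [Field K] : Type _ :=
  Additive Kˣ →+ Lam ℓ m

variable {ℓ : ℕ} [Fact ℓ.Prime] {K : Type*} [Field K]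

open scoped Classical

/-- Evaluation of `σ ∈ 𝔤^m(K)` at a unit of `K`. -/
def galu {m : ℕ∞} (σ : gal ℓ m K) (x : Kˣ) : Lam ℓ m :=
  σ (Additive.ofMul x)

/-- Evaluation of `σ ∈ 𝔤^m(K)` at an arbitrary element of `K` (junk value `0` at `0`). -/
def galApp {m : ℕ∞} (σ : gal ℓ m K) (x : K) : Lam ℓ m :=
  if hx : x ≠ 0 then galu σ (Units.mk0 x hx) else 0

/-- Scalar multiplication of `𝔤^m(K)` by `Λ_m`. -/
def galSmul {m : ℕ∞} (a : Lam ℓ m) (σ : gal ℓ m K) : gal ℓ m K :=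
  AddMonoidHom.mk' (fun x => a * σ x) (by intro x y; simp only [map_add, mul_add])

/-- The canonical map `𝔤^m(K) → 𝔤^n(K)`, `σ ↦ σ_n`. -/
def galProj (m n : ℕ∞) (σ : gal ℓ m K) : gal ℓ n K :=
  (LamProj ℓ m n).comp σ

/-- `(σ,τ)` is a C-pair: `σ(x)·τ(1−x) = σ(1−x)·τ(x)` for all `x ∈ K ∖ {0,1}`. -/
def IsCPair {m : ℕ∞} (σ τ : gal ℓ m K) : Prop :=
  ∀ x : K, x ≠ 0 → x ≠ 1 →
    galApp σ x * galApp τ (1 - x) = galApp σ (1 - x) * galApp τ x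

/-- A subset of `𝔤^m(K)` is a C-set if all pairs of its elements are C-pairs. -/
def IsCSet {m : ℕ∞} (S : Set (gal ℓ m K)) : Prop :=
  ∀ σ ∈ S, ∀ τ ∈ S, IsCPair σ τ

/-- `μ_{c·ℓ^m} ⊂ K`: the polynomial `X^{c·ℓ^m} − 1` splits completely in `K`
(for all finite exponents when `m = ∞`). -/
def MuIn (K : Type*) [Field K] (c ℓ : ℕ) : ℕ∞ → Prop
  | ⊤ => ∀ k : ℕ, Polynomial.Splits ((Polynomial.X ^ (c * ℓ ^ k) - 1 : K[X]).map (RingHom.id K))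
  | (N : ℕ) => Polynomial.Splits ((Polynomial.X ^ (c * ℓ ^ N) - 1 : K[X]).map (RingHom.id K))

/-- `M_r(n) = (r+1)·n − r`. -/
def Mfun (r : ℕ) : ℕ∞ → ℕ∞
  | ⊤ => ⊤
  | (n : ℕ) => (((r + 1) * n - r : ℕ) : ℕ∞)

/-- `N(n) = M_1((6·ℓ^{3n−2} − 7)·(n−1) + 3n − 2)`. -/
def Nfun (ℓ : ℕ) : ℕ∞ → ℕ∞
  | ⊤ => ⊤
  | (n : ℕ) => Mfun 1 (((6 * ℓ ^ (3 * n - 2) - 7) * (n - 1) + 3 * n - 2 : ℕ) : ℕ∞)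

/-- `R(n) = N(M_2(M_1(n)))`. -/
def Rfun (ℓ : ℕ) (n : ℕ∞) : ℕ∞ :=
  Nfun ℓ (Mfun 2 (Mfun 1 n))

/-- The minimized inertia group `I_v^m` of a valuation (valuation subring) of `K`:
homomorphisms vanishing on the `v`-units. -/
def inertia (ℓ : ℕ) [Fact ℓ.Prime] (m : ℕ∞) (A : ValuationSubring K) : Set (gal ℓ m K) :=
  {σ | ∀ x : Kˣ, A.valuation (x : K) = 1 → galu σ x = 0}

/-- The minimized decomposition group `D_v^m` of a valuation (valuation subring) of `K`:
homomorphisms vanishing on the principal `v`-units `1 + 𝔪_v`. -/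
def decomp (ℓ : ℕ) [Fact ℓ.Prime] (m : ℕ∞) (A : ValuationSubring K) : Set (gal ℓ m K) :=
  {σ | ∀ x : Kˣ, A.valuation ((x : K) - 1) < 1 → galu σ x = 0}

/-- A subgroup of (the units of) a linearly ordered group-with-zero is convex. -/
def IsConvexSub {Γ : Type*} [LinearOrderedCommGroupWithZero Γ] (C : Subgroup Γˣ) : Prop :=
  ∀ γ c : Γˣ, (1 : Γ) ≤ (γ : Γ) → (γ : Γ) ≤ (c : Γ) → c ∈ C → γ ∈ C

/-- A subgroup is `ℓ`-divisible. -/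
def IsLDivisible {Γ : Type*} [LinearOrderedCommGroupWithZero Γ] (ℓ : ℕ) (C : Subgroup Γˣ) :
    Prop :=
  ∀ c ∈ C, ∃ d ∈ C, d ^ ℓ = c

/-- Condition (V1): the value group `vK` contains no nontrivial `ℓ`-divisible convex
subgroups. -/
def NoLDivConvex (ℓ : ℕ) (A : ValuationSubring K) : Prop :=
  ∀ C : Subgroup (A.ValueGroup)ˣ, IsConvexSub C → IsLDivisible ℓ C → C = ⊥

/-- The residue field `Kv` of a valuation. -/
abbrev resField (A : ValuationSubring K) : Type _ := IsLocalRing.ResidueField A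

/-- `τ ∈ 𝔤^m(Kv)` is the element induced by `σ ∈ D_v^m` (i.e. `τ = σ_v`): for every
`v`-unit `x` one has `τ(x̄) = σ(x)`. -/
def Induces {m : ℕ∞} (A : ValuationSubring K) (σ : gal ℓ m K)
    (τ : gal ℓ m (resField A)) : Prop :=
  ∀ (x : Kˣ) (h : A.valuation (x : K) = 1),
    galApp τ (IsLocalRing.residue A ⟨(x : K), (A.valuation_le_one_iff (x : K)).mp h.le⟩) =
      galu σ x

/-- An `m`-visible valuation. -/
def IsVisibleVal (ℓ : ℕ) [Fact ℓ.Prime] (m : ℕ∞) (A : ValuationSubring K) : Prop :=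
  NoLDivConvex ℓ A ∧
  ¬ IsCSet (Set.univ : Set (gal ℓ m (resField A))) ∧
  ∀ B : ValuationSubring (resField A),
    decomp ℓ m B = Set.univ → inertia ℓ m B = {0}

/-- `Σ^⊥ = ∩_{σ ∈ Σ} ker σ ⊆ Kˣ`. -/
def orth {m : ℕ∞} (S : Set (gal ℓ m K)) : Set Kˣ :=
  {x | ∀ σ ∈ S, galu σ x = 0}

/-- `σ` is valuative: `σ ∈ I_v^m` for some valuation `v` of `K`. -/
def IsValuative {m : ℕ∞} (σ : gal ℓ m K) : Prop :=
  ∃ A : ValuationSubring K, σ ∈ inertia ℓ m A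

/-- `V = v_σ` is the coarsest valuation with `σ ∈ I_V^m`. -/
def IsVsigma {m : ℕ∞} (σ : gal ℓ m K) (V : ValuationSubring K) : Prop :=
  σ ∈ inertia ℓ m V ∧ ∀ W : ValuationSubring K, σ ∈ inertia ℓ m W → W ≤ V

/-- `V = v_Σ` is the coarsest valuation with `Σ ⊆ I_V^m`. -/
def IsVSet {m : ℕ∞} (S : Set (gal ℓ m K)) (V : ValuationSubring K) : Prop :=
  S ⊆ inertia ℓ m V ∧ ∀ W : ValuationSubring K, S ⊆ inertia ℓ m W → W ≤ V

/-- The set `D^m_n(Σ)`. -/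
def Dmn (n m : ℕ∞) (S : Set (gal ℓ n K)) : Set (gal ℓ n K) :=
  {τ | ∀ σ ∈ S, ∃ τ₁ τ₂ : gal ℓ n K, ∃ σ' τ' τ₁' τ₂' : gal ℓ m K,
    galProj m n σ' = σ ∧ galProj m n τ' = τ ∧ galProj m n τ₁' = τ₁ ∧ galProj m n τ₂' = τ₂ ∧
    ¬ IsCPair τ₁ τ₂ ∧ IsCPair σ' τ' ∧ IsCPair σ' τ₁' ∧ IsCPair σ' τ₂'}

/-- The set `I^m_n(Σ)`. -/
def Imn (n m : ℕ∞) (S : Set (gal ℓ n K)) : Set (gal ℓ n K) :=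
  {σ | σ ∈ S ∧ ∃ σ' : gal ℓ m K, galProj m n σ' = σ ∧
    ∀ τ ∈ S, ∃ τ' : gal ℓ m K, galProj m n τ' = τ ∧ IsCPair σ' τ'}

/-- `K` is a function field over `k`, i.e. a finitely generated field extension. -/
def IsFunctionField (k K : Type*) [Field k] [Field K] [Algebra k K] : Prop :=
  ∃ s : Finset K, IntermediateField.adjoin k (s : Set K) = ⊤

/-- `trdeg(K|k) = d`. -/
def HasTrdeg (k K : Type*) [Field k] [Field K] [Algebra k K] (d : ℕ) : Prop :=
  ∃ b : Fin d → K, IsTranscendenceBasis k b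


/-- The set `ℓ^n·𝔤^m(K)` (interpreted as the trivial subgroup when `n = ∞`). -/
def lPowSet (ℓ : ℕ) [Fact ℓ.Prime] (m : ℕ∞) (K : Type*) [Field K] : ℕ∞ → Set (gal ℓ m K)
  | ⊤ => {0}
  | (k : ℕ) => {x | ∃ σ : gal ℓ m K, x = galSmul ((ℓ : Lam ℓ m) ^ k) σ}

end


noncomputable section AuxStmt9

namespace AuxStmt9

variable {K : Type*} [Field K]


lemma aux_dvd_pol (a b : ℕ) (h : a ∣ b) : (X ^ a - 1 : K[X]) ∣ X ^ b - 1 := by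
  obtain ⟨c, rfl⟩ := h
  have := sub_dvd_pow_sub_pow (X ^ a : K[X]) 1 c
  simpa [← pow_mul] using this

lemma aux_rootext {ℓ : ℕ} (hℓ : 0 < ℓ) (k : ℕ)
    (hs : Splits (X ^ (ℓ ^ (k+1)) - 1 : K[X]))
    (x : Kˣ) (hx : (x : K) ^ (ℓ ^ k) = 1) :
    ∃ y : Kˣ, y ^ ℓ = x ∧ (y : K) ^ (ℓ ^ (k+1)) = 1 := by
  have hroot : (X - C (x : K)) ∣ (X ^ (ℓ ^ k) - 1) :=
    dvd_iff_isRoot.mpr (by simp [IsRoot, hx])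
  have hcomp : ((X ^ (ℓ ^ k) - 1 : K[X]).comp (X ^ ℓ)) = X ^ (ℓ ^ (k+1)) - 1 := by
    simp [sub_comp, pow_comp, X_comp, ← pow_mul, pow_succ, mul_comm]
  have hdvd2 : (X ^ ℓ - C (x : K)) ∣ (X ^ (ℓ ^ (k+1)) - 1) := by
    obtain ⟨r, hr⟩ := hroot
    refine ⟨r.comp (X ^ ℓ), ?_⟩
    rw [← hcomp, hr, mul_comp, sub_comp, X_comp, C_comp]
  have hne : (X ^ (ℓ ^ (k+1)) - 1 : K[X]) ≠ 0 := by
    have := X_pow_sub_C_ne_zero (pow_pos hℓ (k+1)) (1 : K)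
    simpa using this
  have hsp2 : Splits (X ^ ℓ - C (x : K)) :=
    hs.of_dvd hne hdvd2
  have hdeg : (X ^ ℓ - C (x : K)).degree ≠ 0 := by
    rw [degree_X_pow_sub_C hℓ]
    exact_mod_cast hℓ.ne'
  obtain ⟨y₀, hy₀⟩ := hsp2.exists_eval_eq_zero hdeg
  rw [eval_sub, eval_pow, eval_X, eval_C, sub_eq_zero] at hy₀
  have hy0 : y₀ ≠ 0 := by
    rintro rfl
    exact (Units.ne_zero x) (by simpa [zero_pow hℓ.ne'] using hy₀.symm)
  refine ⟨Units.mk0 y₀ hy0, Units.ext (by simpa using hy₀), ?_⟩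
  show y₀ ^ ℓ ^ (k+1) = 1
  rw [pow_succ', pow_mul, hy₀, hx]

lemma aux_roottower {ℓ : ℕ} (hℓ : 0 < ℓ) (j : ℕ) :
    ∀ (k : ℕ), (∀ t : ℕ, t ≤ k + j → Splits (X ^ (ℓ ^ t) - 1 : K[X])) →
    ∀ (x : Kˣ), (x : K) ^ (ℓ ^ k) = 1 →
    ∃ y : Kˣ, y ^ (ℓ ^ j) = x ∧ (y : K) ^ (ℓ ^ (k + j)) = 1 := by
  induction j with
  | zero => exact fun k _ x hx => ⟨x, by simp, by simpa using hx⟩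
  | succ j ih =>
    intro k hs x hx
    obtain ⟨y₁, hy₁, hy₁t⟩ := aux_rootext hℓ k (hs (k+1) (by omega)) x hx
    obtain ⟨z, hz, hzt⟩ := ih (k+1) (fun t ht => hs t (by omega)) y₁ hy₁t
    refine ⟨z, ?_, by rw [show k + (j+1) = (k+1) + j by omega]; exact hzt⟩
    rw [pow_succ, pow_mul, hz, hy₁]
section AuxStmt9


abbrev QZ : Type := AddCircle (1 : ℚ)

/-- embedding `ZMod M → ℚ/ℤ`, `1 ↦ 1/M`. -/
def eQ (M : ℕ) : ZMod M →+ QZ :=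
  ZMod.lift M ⟨zmultiplesHom QZ (((M : ℚ)⁻¹ : ℚ) : QZ), by
    rcases eq_or_ne (M : ℚ) 0 with h | h
    · simp [zmultiplesHom_apply, ← AddCircle.coe_zsmul, h]
    · simp only [zmultiplesHom_apply, ← AddCircle.coe_zsmul]
      rw [show ((M:ℤ) • ((M:ℚ)⁻¹) : ℚ) = 1 by rw [zsmul_eq_mul]; push_cast; field_simp]
      exact AddCircle.coe_period (p := (1:ℚ))⟩

lemma eQ_intCast (M : ℕ) (k : ℤ) : eQ M (k : ZMod M) = (((k : ℚ) / (M : ℚ) : ℚ) : QZ) := by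
  rw [eQ, ZMod.lift_coe]
  simp only [zmultiplesHom_apply, ← AddCircle.coe_zsmul]
  norm_num [div_eq_mul_inv]

lemma eQ_injective {M : ℕ} (hM : M ≠ 0) : Function.Injective (eQ M) := by
  rw [injective_iff_map_eq_zero]
  intro z hz
  obtain ⟨k, rfl⟩ := ZMod.intCast_surjective z
  rw [eQ_intCast, AddCircle.coe_eq_zero_iff] at hz
  obtain ⟨t, ht⟩ := hz
  rw [ZMod.intCast_zmod_eq_zero_iff_dvd]
  have hM' : (M : ℚ) ≠ 0 := Nat.cast_ne_zero.mpr hM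
  have ht' : (t : ℚ) = (k : ℚ) / M := by simpa using ht
  have h2 : (k : ℚ) = M * t := by rw [ht']; field_simp
  exact ⟨t, by exact_mod_cast h2⟩

lemma eQ_surj_on_torsion {M : ℕ} (hM : M ≠ 0) (x : QZ) (hx : M • x = 0) :
    ∃ z : ZMod M, eQ M z = x := by
  obtain ⟨r, rfl⟩ := QuotientAddGroup.mk_surjective x
  have hx' : ((M • r : ℚ) : QZ) = 0 := by rw [AddCircle.coe_nsmul]; exact hx
  rw [AddCircle.coe_eq_zero_iff] at hx'
  obtain ⟨t, ht⟩ := hx'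
  refine ⟨(t : ZMod M), ?_⟩
  rw [eQ_intCast]
  congr 1
  have hM' : (M : ℚ) ≠ 0 := Nat.cast_ne_zero.mpr hM
  have ht' : (t : ℚ) = (M:ℚ) * r := by simpa [nsmul_eq_mul] using ht
  rw [div_eq_iff hM', ht']; ring

lemma cast_eQ {ℓ : ℕ} (hℓ : ℓ ≠ 0) {n m : ℕ} (hnm : n ≤ m) (z : ZMod (ℓ ^ m)) :
    eQ (ℓ ^ n) (ZMod.castHom (pow_dvd_pow ℓ hnm) (ZMod (ℓ ^ n)) z)
      = ℓ ^ (m - n) • eQ (ℓ ^ m) z := by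
  obtain ⟨k, rfl⟩ := ZMod.intCast_surjective z
  rw [map_intCast, eQ_intCast, eQ_intCast, ← AddCircle.coe_nsmul]
  congr 1
  have h1 : (ℓ:ℚ) ^ (m - n) * (ℓ:ℚ) ^ n = (ℓ:ℚ) ^ m := by
    rw [← pow_add, Nat.sub_add_cancel hnm]
  have h2 : (ℓ:ℚ) ≠ 0 := Nat.cast_ne_zero.mpr hℓ
  have h3 : ((ℓ ^ n : ℕ) : ℚ) ≠ 0 := Nat.cast_ne_zero.mpr (pow_ne_zero _ hℓ)
  have h4 : ((ℓ ^ m : ℕ) : ℚ) ≠ 0 := Nat.cast_ne_zero.mpr (pow_ne_zero _ hℓ)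
  rw [nsmul_eq_mul]
  push_cast
  field_simp
  rw [← h1]; ring

/-- Main finite-level lifting lemma. -/
lemma lift_exists {A : Type*} [AddCommGroup A] {ℓ : ℕ} (hℓ : ℓ ≠ 0) {n m : ℕ} (hnm : n ≤ m)
    (hdiv : ∀ a : A, ℓ ^ (m - n) • a = 0 → ∃ b : A, a = ℓ ^ n • b)
    (f : A →+ ZMod (ℓ ^ n)) :
    ∃ g : A →+ ZMod (ℓ ^ m),
      ((ZMod.castHom (pow_dvd_pow ℓ hnm) (ZMod (ℓ ^ n))).toAddMonoidHom).comp g = f := by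
  classical
  set q := ℓ ^ (m - n) with hq
  let u : A →+ A := AddMonoidHom.mk' (fun a => q • a) (fun a b => smul_add q a b)
  have hfk : ∀ z : ZMod (ℓ ^ n), ℓ ^ n • z = 0 := by
    intro z
    rw [nsmul_eq_mul]
    norm_cast
    rw [ZMod.natCast_self, zero_mul]
  have hker : ∀ a ∈ u.ker, ((eQ (ℓ ^ n)).comp f) a = 0 := by
    intro a ha
    obtain ⟨b, rfl⟩ := hdiv a ha
    simp only [AddMonoidHom.comp_apply]
    rw [map_nsmul, hfk, map_zero]
  let fbar : A ⧸ u.ker →+ QZ := QuotientAddGroup.lift u.ker ((eQ (ℓ ^ n)).comp f) hker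
  obtain ⟨H, hH⟩ := (Module.Baer.of_divisible QZ).extension_property_addMonoidHom
    (QuotientAddGroup.kerLift u) (QuotientAddGroup.kerLift_injective u) fbar
  have key : ∀ a : A, H (q • a) = eQ (ℓ ^ n) (f a) := by
    intro a
    have h1 : QuotientAddGroup.kerLift u ((QuotientAddGroup.mk a : A ⧸ u.ker)) = q • a := rfl
    have h2 := congrFun (congrArg (fun (φ : _ →+ QZ) => (φ : (A ⧸ u.ker) → QZ)) hH)
      (QuotientAddGroup.mk a)
    exact (map_nsmul H q a).trans (by simpa [h1, fbar] using h2 :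
      q • H a = (QuotientAddGroup.lift u.ker ((eQ (ℓ ^ n)).comp f) hker) (a : A ⧸ u.ker))
  have tor : ∀ a : A, ℓ ^ m • H a = 0 := by
    intro a
    have hsm : (ℓ ^ m) • a = q • (ℓ ^ n • a) := by
      rw [smul_smul, hq, ← pow_add, Nat.sub_add_cancel hnm]
    rw [← map_nsmul, hsm, key, map_nsmul, hfk, map_zero]
  have ex : ∀ a : A, ∃ z : ZMod (ℓ ^ m), eQ (ℓ ^ m) z = H a :=
    fun a => eQ_surj_on_torsion (pow_ne_zero _ hℓ) (H a) (tor a)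
  choose G hG using ex
  have hGadd : ∀ a b, G (a + b) = G a + G b := by
    intro a b
    apply eQ_injective (pow_ne_zero m hℓ)
    rw [map_add, hG, hG, hG, map_add]
  refine ⟨AddMonoidHom.mk' G hGadd, AddMonoidHom.ext fun a => ?_⟩
  apply eQ_injective (pow_ne_zero n hℓ)
  show eQ (ℓ^n) (ZMod.castHom (pow_dvd_pow ℓ hnm) (ZMod (ℓ^n)) (G a)) = eQ (ℓ^n) (f a)
  rw [cast_eQ hℓ hnm (G a), hG a, ← hq, ← map_nsmul]
  exact key a

/-- Kernel lemma at finite level. -/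
lemma mult_exists {A : Type*} [AddCommGroup A] {ℓ : ℕ} (hℓ : ℓ ≠ 0) {n m : ℕ} (hnm : n ≤ m)
    (σ : A →+ ZMod (ℓ ^ m))
    (hσ : ∀ a, ZMod.castHom (pow_dvd_pow ℓ hnm) (ZMod (ℓ ^ n)) (σ a) = 0)
    (hdiv : ∀ a : A, ℓ ^ n • a = 0 → ∃ b : A, a = ℓ ^ (m - n) • b) :
    ∃ τ : A →+ ZMod (ℓ ^ m), ∀ a, σ a = (ℓ : ZMod (ℓ ^ m)) ^ n * τ a := by
  classical
  haveI : NeZero (ℓ ^ m) := ⟨pow_ne_zero _ hℓ⟩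
  haveI : NeZero (ℓ ^ n) := ⟨pow_ne_zero _ hℓ⟩
  let J : ZMod (ℓ ^ (m - n)) →+ ZMod (ℓ ^ m) :=
    ZMod.lift _ ⟨zmultiplesHom _ ((ℓ : ZMod (ℓ ^ m)) ^ n), by
      simp only [zmultiplesHom_apply]
      rw [zsmul_eq_mul]
      push_cast
      rw [← pow_add, Nat.sub_add_cancel hnm]
      norm_cast
      rw [ZMod.natCast_self]⟩
  have hJint : ∀ k : ℤ, J (k : ZMod (ℓ ^ (m-n))) = (k : ZMod (ℓ ^ m)) * (ℓ : ZMod (ℓ ^ m)) ^ n := by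
    intro k
    show ZMod.lift _ _ ((k : ZMod (ℓ ^ (m-n)))) = _
    rw [ZMod.lift_coe]
    simp [zmultiplesHom_apply, zsmul_eq_mul]
  have hJinj : Function.Injective J := by
    rw [injective_iff_map_eq_zero]
    intro z hz
    obtain ⟨k, rfl⟩ := ZMod.intCast_surjective z
    rw [hJint] at hz
    have : ((k * (ℓ ^ n : ℕ) : ℤ) : ZMod (ℓ ^ m)) = 0 := by push_cast; exact hz
    rw [ZMod.intCast_zmod_eq_zero_iff_dvd] at this
    rw [ZMod.intCast_zmod_eq_zero_iff_dvd]
    have hfac : ((ℓ ^ m : ℕ) : ℤ) = ((ℓ ^ (m-n) : ℕ) : ℤ) * ((ℓ ^ n : ℕ) : ℤ) := by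
      push_cast
      rw [← pow_add, Nat.sub_add_cancel hnm]
    rw [hfac] at this
    have hn0 : ((ℓ ^ n : ℕ) : ℤ) ≠ 0 := by exact_mod_cast pow_ne_zero n hℓ
    exact (mul_dvd_mul_iff_right hn0).mp this
  have hJsurj : ∀ x : ZMod (ℓ ^ m),
      ZMod.castHom (pow_dvd_pow ℓ hnm) (ZMod (ℓ ^ n)) x = 0 → ∃ z, J z = x := by
    intro x hx
    have hxv : ((x.val : ℕ) : ZMod (ℓ ^ m)) = x := by
      rw [ZMod.natCast_val, ZMod.cast_id]
    have hcast : ((x.val : ℕ) : ZMod (ℓ ^ n)) = 0 := by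
      rw [← map_natCast (ZMod.castHom (pow_dvd_pow ℓ hnm) (ZMod (ℓ ^ n))) x.val, hxv, hx]
    rw [ZMod.natCast_eq_zero_iff] at hcast
    obtain ⟨s, hs⟩ := hcast
    refine ⟨(s : ℤ), ?_⟩
    rw [hJint, ← hxv, hs]
    push_cast
    ring
  choose C hC using fun a => hJsurj (σ a) (hσ a)
  have hCadd : ∀ a b, C (a + b) = C a + C b := by
    intro a b
    apply hJinj
    rw [map_add, hC, hC, hC, map_add]
  obtain ⟨τ, hτ⟩ := lift_exists hℓ (Nat.sub_le m n)
    (by rw [Nat.sub_sub_self hnm]; exact hdiv) (AddMonoidHom.mk' C hCadd)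
  have hJmul : ∀ y : ZMod (ℓ ^ m),
      (ℓ : ZMod (ℓ ^ m)) ^ n * y
        = J (ZMod.castHom (pow_dvd_pow ℓ (Nat.sub_le m n)) (ZMod (ℓ ^ (m - n))) y) := by
    intro y
    obtain ⟨k, rfl⟩ := ZMod.intCast_surjective y
    rw [map_intCast, hJint]
    ring
  refine ⟨τ, fun a => ?_⟩
  rw [hJmul, ← hC a]
  congr 1
  exact (congrFun (congrArg (fun (φ : _ →+ ZMod (ℓ^(m-n))) => (φ : A → ZMod (ℓ^(m-n)))) hτ) a).symm

section Padic

variable {ℓ : ℕ} [hp : Fact ℓ.Prime]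

omit hp in
lemma castHom_castHom {a b c : ℕ} (h1 : a ∣ b) (h2 : b ∣ c) (h3 : a ∣ c) (x : ZMod c) :
    ZMod.castHom h1 (ZMod a) (ZMod.castHom h2 (ZMod b) x) = ZMod.castHom h3 (ZMod a) x := by
  rw [← RingHom.comp_apply, ZMod.castHom_comp]

lemma exists_padic_of_compat (c : ∀ k : ℕ, ZMod (ℓ ^ k))
    (hc : ∀ (k1 k2 : ℕ) (h : k1 ≤ k2),
      ZMod.castHom (pow_dvd_pow ℓ h) (ZMod (ℓ ^ k1)) (c k2) = c k1) :
    ∃ x : PadicInt ℓ, ∀ k, PadicInt.toZModPow k x = c k := by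
  let f : ∀ k : ℕ, Polynomial ℤ →+* ZMod (ℓ ^ k) :=
    fun k => Polynomial.eval₂RingHom (Int.castRingHom _) (c k)
  have compat : ∀ (k1 k2 : ℕ) (hk : k1 ≤ k2),
      (ZMod.castHom (pow_dvd_pow ℓ hk) (ZMod (ℓ ^ k1))).comp (f k2) = f k1 := by
    intro k1 k2 hk
    apply Polynomial.ringHom_ext
    · intro a
      simp [f]
    · simp [f, hc k1 k2 hk]
  refine ⟨PadicInt.lift compat X, fun k => ?_⟩
  have := congrFun (congrArg (fun (φ : Polynomial ℤ →+* ZMod (ℓ ^ k)) => (φ : Polynomial ℤ → _))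
    (PadicInt.lift_spec compat k)) X
  simpa [f] using this

/-- Lifting to `ℤ_ℓ`. -/
lemma padic_lift {A : Type*} [AddCommGroup A] (n : ℕ)
    (hdiv : ∀ j : ℕ, ∀ a : A, ℓ ^ 1 • a = 0 → ∃ b : A, a = ℓ ^ j • b)
    (f : A →+ ZMod (ℓ ^ n)) :
    ∃ g : A →+ PadicInt ℓ,
      (PadicInt.toZModPow n).toAddMonoidHom.comp g = f := by
  classical
  have hℓ : ℓ ≠ 0 := hp.out.ne_zero
  -- the tower
  let step : ∀ (j : ℕ) (w : A →+ ZMod (ℓ ^ (n + j))),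
      {w' : A →+ ZMod (ℓ ^ (n + (j+1))) //
        (ZMod.castHom (pow_dvd_pow ℓ (Nat.le_succ (n+j))) (ZMod (ℓ ^ (n+j)))).toAddMonoidHom.comp
          w' = w} := by
    intro j w
    have h := lift_exists hℓ (Nat.le_succ (n+j))
      (by
        intro a ha
        refine hdiv (n + j) a ?_
        rwa [show (n+j).succ - (n+j) = 1 by omega] at ha) w
    exact ⟨h.choose, h.choose_spec⟩
  let v : ∀ j : ℕ, A →+ ZMod (ℓ ^ (n + j)) := fun j =>
    Nat.rec (motive := fun j => A →+ ZMod (ℓ ^ (n + j))) f (fun j w => (step j w).1) j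
  have hv0 : v 0 = f := rfl
  have hvs : ∀ j (hd : ℓ ^ (n+j) ∣ ℓ ^ (n+(j+1))) a,
      ZMod.castHom hd (ZMod (ℓ ^ (n+j))) ((v (j+1)) a) = v j a := by
    intro j hd a
    exact congrFun (congrArg (fun (φ : A →+ ZMod (ℓ ^ (n+j))) => (φ : A → _))
      (step j (v j)).2) a
  have hvchain : ∀ (j1 j2 : ℕ) (h : j1 ≤ j2) (hd : ℓ ^ (n + j1) ∣ ℓ ^ (n + j2)) (a : A),
      ZMod.castHom hd (ZMod (ℓ ^ (n + j1))) (v j2 a) = v j1 a := by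
    intro j1 j2 h
    induction j2, h using Nat.le_induction with
    | base =>
      intro hd a
      exact congrFun (congrArg (fun (φ : ZMod (ℓ^(n+j1)) →+* ZMod (ℓ^(n+j1))) => (φ : _ → _))
        ZMod.castHom_self) (v j1 a)
    | succ j2 hj ih =>
      intro hd a
      have e2 : ZMod.castHom (pow_dvd_pow ℓ (Nat.le_succ (n+j2))) (ZMod (ℓ^(n+j2)))
          ((v (j2+1)) a) = v j2 a := hvs j2 _ a
      have e1 := castHom_castHom (pow_dvd_pow ℓ (by omega : n + j1 ≤ n + j2))
        (pow_dvd_pow ℓ (Nat.le_succ (n + j2))) hd ((v (j2+1)) a)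
      rw [e2] at e1
      exact e1.symm.trans (ih _ a)
  let cfam : ∀ (a : A) (k : ℕ), ZMod (ℓ ^ k) := fun a k =>
    ZMod.castHom (pow_dvd_pow ℓ (Nat.le_add_left k n)) (ZMod (ℓ ^ k)) (v k a)
  have hcompat : ∀ (a : A) (k1 k2 : ℕ) (h : k1 ≤ k2),
      ZMod.castHom (pow_dvd_pow ℓ h) (ZMod (ℓ ^ k1)) (cfam a k2) = cfam a k1 := by
    intro a k1 k2 h
    show ZMod.castHom _ (ZMod (ℓ ^ k1)) (ZMod.castHom _ (ZMod (ℓ ^ k2)) (v k2 a)) = _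
    rw [castHom_castHom (pow_dvd_pow ℓ h) (pow_dvd_pow ℓ (Nat.le_add_left k2 n))
      (pow_dvd_pow ℓ (by omega : k1 ≤ n + k2)) (v k2 a),
      ← castHom_castHom (pow_dvd_pow ℓ (Nat.le_add_left k1 n))
        (pow_dvd_pow ℓ (by omega : n + k1 ≤ n + k2))
        (pow_dvd_pow ℓ (by omega : k1 ≤ n + k2)) (v k2 a),
      hvchain k1 k2 h]
  have hex : ∀ a : A, ∃ x : PadicInt ℓ, ∀ k, PadicInt.toZModPow k x = cfam a k :=
    fun a => exists_padic_of_compat (cfam a) (hcompat a)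
  choose G hG using hex
  have hGadd : ∀ a b, G (a + b) = G a + G b := by
    intro a b
    rw [← PadicInt.ext_of_toZModPow]
    intro k
    rw [map_add, hG, hG, hG]
    show ZMod.castHom _ _ _ = _
    rw [map_add, map_add]
  refine ⟨AddMonoidHom.mk' G hGadd, AddMonoidHom.ext fun a => ?_⟩
  show PadicInt.toZModPow n (G a) = f a
  rw [hG]
  show ZMod.castHom _ (ZMod (ℓ ^ n)) (v n a) = f a
  exact hvchain 0 n (Nat.zero_le n) (pow_dvd_pow ℓ (Nat.le_add_left n n)) a

end Padic


variable {ℓ : ℕ}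

lemma unit_div [Fact ℓ.Prime] {m : ℕ∞} (hμ : MuIn K 1 ℓ m)
    (k j : ℕ) (hkj : ((k + j : ℕ) : ℕ∞) ≤ m) (x : Kˣ) (hx : x ^ (ℓ ^ k) = 1) :
    ∃ y : Kˣ, y ^ (ℓ ^ j) = x := by
  have hℓ : 0 < ℓ := (Fact.out : ℓ.Prime).pos
  have hsplit : ∀ t : ℕ, ((t : ℕ∞)) ≤ m → Splits (X ^ (ℓ ^ t) - 1 : K[X]) := by
    cases m with
    | top =>
      intro t _
      have h2 : Splits ((X ^ (1 * ℓ ^ t) - 1 : K[X]).map (RingHom.id K)) := hμ t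
      rwa [one_mul, Polynomial.map_id] at h2
    | coe M =>
      intro t ht
      have htM : t ≤ M := by exact_mod_cast ht
      have hμ' : Splits (X ^ (ℓ ^ M) - 1 : K[X]) := by
        have h2 : Splits ((X ^ (1 * ℓ ^ M) - 1 : K[X]).map (RingHom.id K)) := hμ
        rwa [one_mul, Polynomial.map_id] at h2
      have hne : (X ^ (ℓ ^ M) - 1 : K[X]) ≠ 0 := by
        have := X_pow_sub_C_ne_zero (pow_pos hℓ M) (1 : K)
        simpa using this
      exact hμ'.of_dvd hne (aux_dvd_pol _ _ (pow_dvd_pow ℓ htM))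
  have hx' : (x : K) ^ (ℓ ^ k) = 1 := by
    have := congrArg (Units.val) hx
    simpa using this
  obtain ⟨y, hy, -⟩ := aux_roottower hℓ j k
    (fun t ht => hsplit t (le_trans (by exact_mod_cast ht) hkj)) x hx'
  exact ⟨y, hy⟩

lemma add_div [Fact ℓ.Prime] {m : ℕ∞} (hμ : MuIn K 1 ℓ m)
    (k j : ℕ) (hkj : ((k + j : ℕ) : ℕ∞) ≤ m) :
    ∀ a : Additive Kˣ, ℓ ^ k • a = 0 → ∃ b : Additive Kˣ, a = ℓ ^ j • b := by
  intro a ha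
  have hx : (Additive.toMul a) ^ (ℓ ^ k) = 1 := by
    have := congrArg Additive.toMul ha
    simpa using this
  obtain ⟨y, hy⟩ := unit_div hμ k j hkj (Additive.toMul a) hx
  refine ⟨Additive.ofMul y, ?_⟩
  apply Additive.toMul.injective
  simpa using hy.symm

end AuxStmt9

end AuxStmt9

/-- Surjectivity of `𝔤^m(K) → 𝔤^n(K)` and computation of its kernel. -/
theorem stmt9 (ℓ : ℕ) [Fact ℓ.Prime] (m n : ℕ∞) (hn : 1 ≤ n) (hnm : n ≤ m)
    (K : Type*) [Field K] (hμ : MuIn K 1 ℓ m) :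
    Function.Surjective (galProj m n : gal ℓ m K → gal ℓ n K) ∧
    {σ : gal ℓ m K | galProj m n σ = 0} = lPowSet ℓ m K n := by
  classical
  have hℓ0 : ℓ ≠ 0 := (Fact.out : ℓ.Prime).ne_zero
  have hdivA := fun (k j : ℕ) (h : ((k + j : ℕ) : ℕ∞) ≤ m) =>
    AuxStmt9.add_div (K := K) hμ k j h
  cases m with
  | top =>
    cases n with
    | top =>
      constructor
      · intro σ
        refine ⟨σ, ?_⟩
        show (AddMonoidHom.id _).comp σ = σ
        exact AddMonoidHom.id_comp σ
      · ext σ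
        show (AddMonoidHom.id _).comp σ = 0 ↔ σ ∈ ({0} : Set _)
        rw [AddMonoidHom.id_comp]
        exact Set.mem_singleton_iff.symm
    | coe n =>
      have hdiv1 : ∀ j : ℕ, ∀ a : Additive Kˣ, ℓ ^ 1 • a = 0 → ∃ b, a = ℓ ^ j • b :=
        fun j => hdivA 1 j le_top
      constructor
      · intro f
        obtain ⟨g, hg⟩ := AuxStmt9.padic_lift (ℓ := ℓ) n hdiv1 f
        exact ⟨g, hg⟩
      · ext σ
        constructor
        · intro hσ
          have hσ' : ∀ a, PadicInt.toZModPow n (σ a) = 0 := by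
            intro a
            exact congrFun (congrArg (fun (φ : gal ℓ (↑n) K) => (φ : Additive Kˣ → _)) hσ) a
          have hdvd : ∀ a, ∃ t : PadicInt ℓ, σ a = ((ℓ : PadicInt ℓ)) ^ n * t := by
            intro a
            have hmem : σ a ∈ RingHom.ker (PadicInt.toZModPow (p := ℓ) n) := hσ' a
            rw [PadicInt.ker_toZModPow] at hmem
            obtain ⟨t, ht⟩ := Ideal.mem_span_singleton.mp hmem
            exact ⟨t, ht⟩
          choose T hT using hdvd
          have hne : ((ℓ : PadicInt ℓ)) ^ n ≠ 0 :=
            pow_ne_zero _ (Nat.cast_ne_zero.mpr hℓ0)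
          have hTadd : ∀ a b, T (a + b) = T a + T b := by
            intro a b
            apply mul_left_cancel₀ hne
            rw [← hT, map_add, hT, hT, mul_add]
            rfl
          refine ⟨AddMonoidHom.mk' T hTadd, ?_⟩
          ext a
          exact hT a
        · rintro ⟨τ, rfl⟩
          ext a
          have hz : ((ℓ : ZMod (ℓ ^ n))) ^ n = 0 := by
            rw [← Nat.cast_pow, ZMod.natCast_self]
          have h0 : PadicInt.toZModPow n
              ((ℓ : PadicInt ℓ) ^ n * (show PadicInt ℓ from τ a)) = 0 := by
            rw [map_mul, map_pow, map_natCast, hz, zero_mul]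
          exact h0
  | coe m =>
    cases n with
    | top => exact absurd hnm (by simp)
    | coe n =>
      have hnm' : n ≤ m := by exact_mod_cast hnm
      have hL : LamProj ℓ (↑m) (↑n)
          = (ZMod.castHom (pow_dvd_pow ℓ hnm') (ZMod (ℓ ^ n))).toAddMonoidHom := by
        show dite _ _ _ = _
        exact dif_pos (pow_dvd_pow ℓ hnm')
      have hcast1 : ((((m - n) + n : ℕ)) : ℕ∞) ≤ (m : ℕ∞) := by
        rw [Nat.sub_add_cancel hnm']
      have hcast2 : (((n + (m - n) : ℕ)) : ℕ∞) ≤ (m : ℕ∞) := by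
        rw [Nat.add_sub_cancel' hnm']
      constructor
      · intro f
        obtain ⟨g, hg⟩ := AuxStmt9.lift_exists hℓ0 hnm' (hdivA (m - n) n hcast1) f
        refine ⟨g, ?_⟩
        show (LamProj ℓ (↑m) (↑n)).comp g = f
        rw [hL]
        exact hg
      · ext σ
        constructor
        · intro hσ
          have hσ' : ∀ a, ZMod.castHom (pow_dvd_pow ℓ hnm') (ZMod (ℓ ^ n)) (σ a) = 0 := by
            intro a
            have h1 : (LamProj ℓ (↑m) (↑n)).comp σ = 0 := hσ
            rw [hL] at h1
            exact congrFun (congrArg (fun (φ : Additive Kˣ →+ ZMod (ℓ ^ n)) =>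
              (φ : Additive Kˣ → _)) h1) a
          obtain ⟨τ, hτ⟩ := AuxStmt9.mult_exists hℓ0 hnm' σ hσ' (hdivA n (m - n) hcast2)
          refine ⟨τ, ?_⟩
          ext a
          exact hτ a
        · rintro ⟨τ, rfl⟩
          show (LamProj ℓ (↑m) (↑n)).comp _ = 0
          rw [hL]
          ext a
          have hz : ((ℓ : ZMod (ℓ ^ n))) ^ n = 0 := by
            rw [← Nat.cast_pow, ZMod.natCast_self]
          have h0 : ZMod.castHom (pow_dvd_pow ℓ hnm') (ZMod (ℓ ^ n))
              ((ℓ : ZMod (ℓ ^ m)) ^ n * (show ZMod (ℓ ^ m) from τ a)) = 0 := by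
            rw [map_mul, map_pow, map_natCast, hz, zero_mul]
          exact h0
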